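/- (Lemma 1, Fourier expansion) For every edge set E ⊆ (V choose 2), [Γ^A]_E = f^{−|E|} · Σ_{P a flow on E} Σ_{Q ∈ A^E} ⟨P,Q⟩_E. -/

import Mathlib

open scoped Classical

noncomputable section

/-- Number of connected components of the graph on `V` with edge set `E`. -/
def cComp (V : Type) [Fintype V] (E : Finset (Sym2 V)) : ℕ :=
  Nat.card (SimpleGraph.fromEdgeSet (E : Set (Sym2 V))).ConnectedComponent

/-- `E` is isthmus-free: it contains no edge whose removal increases the number
of connected components. -/
def IsthmusFree (V : Type) [Fintype V] (E : Finset (Sym2 V)) : Prop :=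
  ∀ t ∈ E, ¬ cComp V (E.erase t) > cComp V E

/-- Möbius function of the poset `P_V` of isthmus-free edge sets on `V`,
ordered by inclusion: `μ(K,K) = 1` and `∑_{L ∈ P_V, K ⊆ L ⊆ H} μ(K,L) = 0` for `K ⊊ H`. -/
def muPV (V : Type) [Fintype V] (K H : Finset (Sym2 V)) : ℤ :=
  if K = H then 1
  else - ∑ L ∈ ((H.powerset.filter (fun L => K ⊆ L ∧ L ≠ H ∧ IsthmusFree V L)).attach),
      muPV V K L.1
termination_by H.card
decreasing_by
  have hL := L.2
  simp only [Finset.mem_filter, Finset.mem_powerset] at hL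
  exact Finset.card_lt_card (lt_of_le_of_ne hL.1 hL.2.2.1)

/-- `[Γ^A]_E`: the probability that a uniformly random coloring `X : V → F` has all
differences along edges of `E` inside `A`. -/
def Gamma (V : Type) [Fintype V] (F : Type) [Fintype F] [AddCommGroup F]
    (A : Finset F) (E : Finset (Sym2 V)) : ℝ :=
  (Nat.card {X : V → F //
      ∀ e ∈ E, ∀ u w : V, e = s(u, w) → X u - X w ∈ A} : ℝ) /
    (Fintype.card F : ℝ) ^ (Fintype.card V)

end

lemma prod_ite_eq_pow {ι : Type*} [Fintype ι] (p : ι → Prop) [DecidablePred p]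
    [Decidable (∀ i, p i)] (c : ℂ) :
    (∏ i : ι, (if p i then c else 0)) =
      if (∀ i, p i) then c ^ Fintype.card ι else 0 := by
  split_ifs with h
  · rw [Finset.prod_congr rfl (fun i _ => if_pos (h i)), Finset.prod_const, Finset.card_univ]
  · push_neg at h; obtain ⟨i, hi⟩ := h
    exact Finset.prod_eq_zero (Finset.mem_univ i) (if_neg hi)

lemma indicator_fourier (F : Type) [Fintype F] [AddCommGroup F]
    (A : Finset F) (hA : ∀ a ∈ A, -a ∈ A) (x : F) :
    (if x ∈ A then (Fintype.card F : ℂ) else 0)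
      = ∑ ψ : AddChar F ℂ, ∑ a ∈ A, ψ x * ψ a := by
  rw [Finset.sum_comm]
  have h1 : ∀ a ∈ A, ∑ ψ : AddChar F ℂ, ψ x * ψ a
      = if a = -x then (Fintype.card F : ℂ) else 0 := by
    intro a _
    simp_rw [← AddChar.map_add_eq_mul]
    rw [AddChar.sum_apply_eq_ite]
    congr 1
    simp only [eq_iff_iff]
    constructor
    · intro h; linear_combination (norm := abel) h
    · intro h; linear_combination (norm := abel) h
  rw [Finset.sum_congr rfl h1, Finset.sum_ite_eq' A (-x) (fun _ => (Fintype.card F : ℂ))]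
  congr 1
  simp only [eq_iff_iff]
  exact ⟨fun h => hA x h, fun h => by simpa using hA _ h⟩

lemma sum_prod_char {V F : Type} [Fintype V] [Fintype F] [AddCommGroup F]
    {ι : Type} [Fintype ι] (P : ι → AddChar F ℂ) (u w : ι → V) :
    ∑ X : V → F, ∏ t, P t (X (u t) - X (w t))
      = if (∀ X : V → F, ∏ t, P t (X (u t) - X (w t)) = 1)
        then (Fintype.card F : ℂ) ^ Fintype.card V else 0 := by
  set Ψ : AddChar (V → F) ℂ :=
    { toFun := fun X => ∏ t, P t (X (u t) - X (w t))
      map_zero_eq_one' := by simp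
      map_add_eq_mul' := fun X Y => by
        simp only [Pi.add_apply]
        rw [← Finset.prod_mul_distrib]
        refine Finset.prod_congr rfl fun t _ => ?_
        rw [← AddChar.map_add_eq_mul]
        congr 1
        abel } with hΨ
  have h0 : ∀ X, Ψ X = ∏ t, P t (X (u t) - X (w t)) := fun _ => rfl
  have h1 : (∑ X : V → F, ∏ t, P t (X (u t) - X (w t))) = ∑ X, Ψ X := rfl
  rw [h1, AddChar.sum_eq_ite]
  have hc : ((Fintype.card (V → F) : ℂ)) = (Fintype.card F : ℂ) ^ Fintype.card V := by
    rw [Fintype.card_fun]; push_cast; ring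
  rw [hc]
  congr 1
  simp only [eq_iff_iff]
  constructor
  · intro h X; rw [← h0, h]; simp
  · intro h
    ext X
    rw [h0]
    simpa using h X

/-- Lemma 1, Fourier expansion:
`[Γ^A]_E = f^{-|E|} · Σ_{P a flow on E} Σ_{Q ∈ A^E} ⟨P,Q⟩_E`,
where `P : E → F̂` is a flow iff `⟨P, δ_E X⟩_E = 1` for every `X : V → F`. -/
theorem gamma_eq_fourier_sum_over_flows
    (V : Type) [Fintype V] (F : Type) [Fintype F] [AddCommGroup F]
    (A : Finset F) (hA : ∀ a ∈ A, -a ∈ A)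
    (E : Finset (Sym2 V)) (hE : ∀ e ∈ E, ¬ e.IsDiag)
    (o : Sym2 V → V × V) (ho : ∀ e : Sym2 V, Sym2.mk (o e).1 (o e).2 = e) :
    (Gamma V F A E : ℂ) =
      (∑ P ∈ Finset.univ.filter (fun P : E → AddChar F ℂ =>
          ∀ X : V → F, ∏ t : E, P t (X (o t.1).1 - X (o t.1).2) = 1),
        ∑ Q ∈ Finset.univ.filter (fun Q : E → F => ∀ t : E, Q t ∈ A),
          ∏ t : E, P t (Q t)) / (Fintype.card F : ℂ) ^ E.card := by
  set f : ℂ := (Fintype.card F : ℂ) with hf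
  have hf0 : f ≠ 0 := by
    simp [hf, Fintype.card_ne_zero]
  set good : (V → F) → Prop :=
    fun X => ∀ e ∈ E, ∀ u w : V, e = s(u, w) → X u - X w ∈ A with hgood
  -- Claim A
  have hAiff : ∀ X : V → F, good X ↔ ∀ t : E, X (o t.1).1 - X (o t.1).2 ∈ A := by
    intro X
    constructor
    · intro h t
      exact h t.1 t.2 _ _ (ho t.1).symm
    · intro h e he u w hew
      have ht := h ⟨e, he⟩
      have h2 : s((o e).1, (o e).2) = s(u, w) := by
        rw [show s((o e).1, (o e).2) = Sym2.mk (o e).1 (o e).2 from rfl, ho]; exact hew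
      rw [Sym2.eq_iff] at h2
      rcases h2 with ⟨h3, h4⟩ | ⟨h3, h4⟩
      · rwa [h3, h4] at ht
      · rw [h3, h4] at ht
        simpa using hA _ ht
  set N : ℕ := (Finset.univ.filter good).card with hNdef
  have hGamma : Gamma V F A E = (N : ℝ) / (Fintype.card F : ℝ) ^ Fintype.card V := by
    simp only [Gamma, Nat.card_eq_fintype_card, Fintype.card_subtype, hNdef, hgood]
  set flow : (E → AddChar F ℂ) → Prop :=
    fun P => ∀ X : V → F, ∏ t : E, P t (X (o t.1).1 - X (o t.1).2) = 1 with hflow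
  set S : ℂ := ∑ P ∈ Finset.univ.filter flow,
      ∑ Q ∈ Finset.univ.filter (fun Q : E → F => ∀ t : E, Q t ∈ A),
        ∏ t : E, P t (Q t) with hS
  have key : (N : ℂ) * f ^ E.card = f ^ Fintype.card V * S := by
    have step1 : (N : ℂ) * f ^ E.card
        = ∑ X : V → F, (if good X then f ^ E.card else 0) := by
      rw [Finset.sum_ite, Finset.sum_const, Finset.sum_const_zero, add_zero, nsmul_eq_mul]
    rw [step1]
    have step2 : ∀ X : V → F, (if good X then f ^ E.card else 0)
        = ∏ t : E, (if X (o t.1).1 - X (o t.1).2 ∈ A then f else 0) := by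
      intro X
      rw [prod_ite_eq_pow, Fintype.card_coe]
      congr 1
      simp only [eq_iff_iff]
      exact hAiff X
    simp_rw [step2]
    have step3 : ∀ X : V → F, ∀ t : E,
        (if X (o t.1).1 - X (o t.1).2 ∈ A then f else 0)
        = ∑ y ∈ (Finset.univ ×ˢ A : Finset (AddChar F ℂ × F)),
            y.1 (X (o t.1).1 - X (o t.1).2) * y.1 y.2 := by
      intro X t
      rw [indicator_fourier F A hA, Finset.sum_product]
    simp_rw [step3]
    have step4 : ∀ X : V → F,
        (∏ t : E, ∑ y ∈ (Finset.univ ×ˢ A : Finset (AddChar F ℂ × F)),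
            y.1 (X (o t.1).1 - X (o t.1).2) * y.1 y.2)
        = ∑ g ∈ Fintype.piFinset (fun _ : E => (Finset.univ ×ˢ A : Finset (AddChar F ℂ × F))),
            ∏ t : E, ((g t).1 (X (o t.1).1 - X (o t.1).2) * (g t).1 (g t).2) :=
      fun X => Finset.prod_univ_sum _ _
    simp_rw [step4]
    rw [Finset.sum_comm]
    have step5 : ∀ g : E → AddChar F ℂ × F,
        (∑ X : V → F, ∏ t : E, ((g t).1 (X (o t.1).1 - X (o t.1).2) * (g t).1 (g t).2))
        = (if flow (fun t => (g t).1) then f ^ Fintype.card V else 0)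
            * ∏ t : E, (g t).1 (g t).2 := by
      intro g
      simp_rw [Finset.prod_mul_distrib]
      rw [← Finset.sum_mul]
      congr 1
      exact sum_prod_char (fun t => (g t).1) (fun t : E => (o t.1).1) (fun t : E => (o t.1).2)
    refine Eq.trans (Finset.sum_congr rfl fun g _ => step5 g) ?_
    -- reindex
    have reindex :
        ∑ g ∈ Fintype.piFinset (fun _ : E => (Finset.univ ×ˢ A : Finset (AddChar F ℂ × F))),
          ((if flow (fun t => (g t).1) then f ^ Fintype.card V else 0)
            * ∏ t : E, (g t).1 (g t).2)
        = ∑ P : E → AddChar F ℂ,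
            ∑ Q ∈ Finset.univ.filter (fun Q : E → F => ∀ t : E, Q t ∈ A),
              ((if flow P then f ^ Fintype.card V else 0) * ∏ t : E, P t (Q t)) := by
      rw [← Finset.sum_product']
      refine Finset.sum_nbij' (i := fun g => ((fun t => (g t).1), (fun t => (g t).2)))
        (j := fun pq => fun t => (pq.1 t, pq.2 t)) ?_ ?_ (fun _ _ => rfl) (fun _ _ => rfl)
        (fun _ _ => rfl)
      · intro g hg
        simp only [Fintype.mem_piFinset, Finset.mem_product, Finset.mem_univ, true_and] at hg ⊢
        simp only [Finset.mem_filter, Finset.mem_univ, true_and]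
        exact fun t => hg t
      · intro pq hpq
        simp only [Finset.mem_product, Finset.mem_filter, Finset.mem_univ, true_and] at hpq
        simp only [Fintype.mem_piFinset, Finset.mem_product, Finset.mem_univ, true_and]
        exact fun t => hpq t
    have hfilter : ∀ g : (E → AddChar F ℂ) → ℂ,
        ∑ P ∈ Finset.univ.filter flow, g P
          = ∑ P : E → AddChar F ℂ, if flow P then g P else 0 :=
      fun g => Finset.sum_filter _ _
    rw [reindex, hS, Finset.mul_sum, hfilter]
    refine Finset.sum_congr rfl fun P _ => ?_
    split_ifs with h
    · exact (Finset.mul_sum _ _ _).symm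
    · simp
  -- conclude
  have hG : (Gamma V F A E : ℂ) = (N : ℂ) / f ^ Fintype.card V := by
    rw [hGamma]; push_cast; rfl
  rw [hG]
  rw [div_eq_div_iff (pow_ne_zero _ hf0) (pow_ne_zero _ hf0)]
  linear_combination key
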